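/- In the diamond DAG with vertices {1,2,3,4} and edges 1→2, 1→3, 2→4, 3→4, with generic weights satisfying c₁₂ + c₂₄ > c₁₃ + c₃₄, the C*-separation statements among singletons are exactly: 2 ⊥ 3 | 1, 1 ⊥ 4 | {2,3}, and 1 ⊥ 4 | 2. In particular 1 is not C*-separated from 4 given {3}. -/

import Mathlib

/-!  Common definitions: weighted DAGs, paths, critical paths,
critical DAGs and C*-separation, following Boege–Ferry–Hollering–Nowell,
"Polyhedral aspects of maxoids". -/

variable {V : Type*}

/-- `p` is a directed path (vertex list) from `i` to `j` in the digraph `E`. -/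
def IsPath (E : V → V → Prop) (i j : V) (p : List V) : Prop :=
  p.head? = some i ∧ p.getLast? = some j ∧ List.Chain' E p

/-- The weight of a path: the sum of the edge weights along consecutive vertices. -/
def pathWeight (c : V → V → ℝ) (p : List V) : ℝ :=
  ((p.zip p.tail).map fun q => c q.1 q.2).sum

/-- `p` is a critical (maximum-weight) path from `i` to `j`. -/
def IsCritical (E : V → V → Prop) (c : V → V → ℝ) (i j : V) (p : List V) : Prop :=
  IsPath E i j p ∧ ∀ q, IsPath E i j q → pathWeight c q ≤ pathWeight c p

/-- The internal vertices of a path (all but the two endpoints). -/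
def internalVerts (p : List V) : List V := p.tail.dropLast

/-- Edge `i → j` of the critical DAG `D*(C,L)`: there is a directed `i`–`j`
path in `G` and no critical `i`–`j` path has an internal vertex in `L`. -/
def critEdge (E : V → V → Prop) (c : V → V → ℝ) (L : Set V) (i j : V) : Prop :=
  (∃ p, IsPath E i j p) ∧
    ∀ p, IsCritical E c i j p → ∀ v ∈ internalVerts p, v ∉ L

/-- `i` and `j` are C*-connected given `L`: some path of one of the five
permitted shapes joins them in the critical DAG `D*(C,L)` (colliders must lie
in `L`, non-colliders outside `L`, at most one collider). -/
def starConn (E : V → V → Prop) (c : V → V → ℝ) (L : Set V) (i j : V) : Prop :=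
  let D := critEdge E c L
  D i j ∨ D j i ∨
  (∃ p, p ∉ L ∧ D p i ∧ D p j) ∨
  (∃ l, l ∈ L ∧ D i l ∧ D j l) ∨
  (∃ p l, p ∉ L ∧ l ∈ L ∧ D p i ∧ D p l ∧ D j l) ∨
  (∃ p l, p ∉ L ∧ l ∈ L ∧ D p j ∧ D p l ∧ D i l) ∨
  (∃ p q l, p ∉ L ∧ q ∉ L ∧ l ∈ L ∧ D p i ∧ D p l ∧ D q l ∧ D q j)

/-- C*-separation of two vertices given `L`. -/
def CSep (E : V → V → Prop) (c : V → V → ℝ) (L : Set V) (i j : V) : Prop :=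
  ¬ starConn E c L i j

/-- C*-connection of two sets of vertices given `L`. -/
def starConnSets (E : V → V → Prop) (c : V → V → ℝ) (L I J : Set V) : Prop :=
  ∃ i ∈ I, ∃ j ∈ J, starConn E c L i j

/-- C*-separation of two sets of vertices given `L`. -/
def CSepSets (E : V → V → Prop) (c : V → V → ℝ) (L I J : Set V) : Prop :=
  ¬ starConnSets E c L I J

/-- The digraph `E` is acyclic. -/
def IsAcyclic (E : V → V → Prop) : Prop := ∀ v, ¬ Relation.TransGen E v v

/-- A weight matrix is generic: between any two vertices the maximum-weight
path is unique whenever one exists. -/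
def Generic (E : V → V → Prop) (c : V → V → ℝ) : Prop :=
  ∀ i j p q, IsCritical E c i j p → IsCritical E c i j q → p = q

/-- The set of generic weight matrices inducing exactly the same critical
paths as `c`. -/
def sameCritSet (E : V → V → Prop) (c : V → V → ℝ) : Set (V → V → ℝ) :=
  {c' | Generic E c' ∧ ∀ i j p, IsCritical E c' i j p ↔ IsCritical E c i j p}

/-- The diamond DAG 1→2, 1→3, 2→4, 3→4 on vertices `Fin 4` (0-indexed). -/
def diamondE : Fin 4 → Fin 4 → Prop := fun a b =>
  (a = 0 ∧ b = 1) ∨ (a = 0 ∧ b = 2) ∨ (a = 1 ∧ b = 3) ∨ (a = 2 ∧ b = 3)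

instance : DecidableRel diamondE := fun a b =>
  decidable_of_iff ((a = 0 ∧ b = 1) ∨ (a = 0 ∧ b = 2) ∨ (a = 1 ∧ b = 3) ∨ (a = 2 ∧ b = 3))
    Iff.rfl

lemma chainChar (p : List (Fin 4)) (hch : List.Chain' diamondE p) :
    p = [] ∨ (∃ v, p = [v]) ∨ p = [0,1] ∨ p = [0,2] ∨ p = [1,3] ∨ p = [2,3] ∨
      p = [0,1,3] ∨ p = [0,2,3] := by
  have hb3 : ∀ (x : Fin 4) (r : List (Fin 4)), ¬ List.Chain' diamondE (3 :: x :: r) := by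
    intro x r hr
    simp only [List.Chain', List.isChain_cons_cons] at hr
    rcases hr.1 with ⟨h1, _⟩ | ⟨h1, _⟩ | ⟨h1, _⟩ | ⟨h1, _⟩ <;> exact absurd h1 (by decide)
  rcases p with _ | ⟨a, _ | ⟨b, rest⟩⟩
  · exact Or.inl rfl
  · exact Or.inr (Or.inl ⟨a, rfl⟩)
  · simp only [List.Chain', List.isChain_cons_cons] at hch
    obtain ⟨hab, hrest⟩ := hch
    have step : ∀ (s : Fin 4), s = 1 ∨ s = 2 → ∀ (r : List (Fin 4)),
        List.Chain' diamondE (s :: r) → r = [] ∨ r = [3] := by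
      intro s hs r hr
      rcases r with _ | ⟨x, r'⟩
      · exact Or.inl rfl
      · simp only [List.Chain', List.isChain_cons_cons] at hr
        have hx : x = 3 := by
          rcases hr.1 with ⟨h1, h2⟩ | ⟨h1, h2⟩ | ⟨h1, h2⟩ | ⟨h1, h2⟩ <;>
            first | exact h2 | (rcases hs with rfl | rfl <;> exact absurd h1 (by decide))
        subst hx
        rcases r' with _ | ⟨y, r''⟩
        · exact Or.inr rfl
        · exact absurd hr.2 (hb3 y r'')
    rcases hab with ⟨rfl, rfl⟩ | ⟨rfl, rfl⟩ | ⟨rfl, rfl⟩ | ⟨rfl, rfl⟩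
    · rcases step 1 (Or.inl rfl) rest hrest with rfl | rfl <;> decide
    · rcases step 2 (Or.inr rfl) rest hrest with rfl | rfl <;> decide
    · rcases rest with _ | ⟨y, r''⟩
      · decide
      · exact absurd hrest (hb3 y r'')
    · rcases rest with _ | ⟨y, r''⟩
      · decide
      · exact absurd hrest (hb3 y r'')

lemma isPath_iff (i j : Fin 4) (p : List (Fin 4)) :
    IsPath diamondE i j p ↔
      (i = j ∧ p = [i]) ∨
      (i = 0 ∧ j = 1 ∧ p = [0,1]) ∨
      (i = 0 ∧ j = 2 ∧ p = [0,2]) ∨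
      (i = 1 ∧ j = 3 ∧ p = [1,3]) ∨
      (i = 2 ∧ j = 3 ∧ p = [2,3]) ∨
      (i = 0 ∧ j = 3 ∧ (p = [0,1,3] ∨ p = [0,2,3])) := by
  constructor
  · rintro ⟨hh, hl, hc⟩
    rcases chainChar p hc with rfl | ⟨v, rfl⟩ | rfl | rfl | rfl | rfl | rfl | rfl <;>
      simp_all [IsPath]
  · rintro (⟨rfl, rfl⟩ | ⟨rfl, rfl, rfl⟩ | ⟨rfl, rfl, rfl⟩ | ⟨rfl, rfl, rfl⟩ |
      ⟨rfl, rfl, rfl⟩ | ⟨rfl, rfl, rfl | rfl⟩)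
    · exact ⟨rfl, rfl, List.isChain_singleton _⟩
    all_goals exact ⟨rfl, rfl, by simp [List.Chain', List.isChain_cons_cons, diamondE]⟩

lemma eqSet (L S : Set (Fin 4)) (e0 : ((0 : Fin 4) ∈ L ↔ (0 : Fin 4) ∈ S))
    (e1 : ((1 : Fin 4) ∈ L ↔ (1 : Fin 4) ∈ S)) (e2 : ((2 : Fin 4) ∈ L ↔ (2 : Fin 4) ∈ S))
    (e3 : ((3 : Fin 4) ∈ L ↔ (3 : Fin 4) ∈ S)) : L = S := by
  ext x
  fin_cases x
  · exact e0
  · exact e1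
  · exact e2
  · exact e3

lemma critEdge_iff (c : Fin 4 → Fin 4 → ℝ) (h : c 0 2 + c 2 3 < c 0 1 + c 1 3)
    (L : Set (Fin 4)) (i j : Fin 4) :
    critEdge diamondE c L i j ↔
      (i = j ∨ (i = 0 ∧ j = 1) ∨ (i = 0 ∧ j = 2) ∨ (i = 1 ∧ j = 3) ∨ (i = 2 ∧ j = 3) ∨
        (i = 0 ∧ j = 3 ∧ (1 : Fin 4) ∉ L)) := by
  have hcrit013 : IsCritical diamondE c 0 3 [0,1,3] := by
    refine ⟨(isPath_iff _ _ _).2 (by tauto), ?_⟩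
    intro q hq
    rw [isPath_iff] at hq
    rcases hq with ⟨ha, _⟩ | ⟨ha, hb, _⟩ | ⟨ha, hb, _⟩ | ⟨ha, hb, _⟩ | ⟨ha, hb, _⟩ |
      ⟨_, _, rfl | rfl⟩ <;> first
        | exact absurd ha (by decide)
        | exact absurd hb (by decide)
        | (simp [pathWeight]; linarith)
        | simp [pathWeight]
  have hnotcrit023 : ¬ IsCritical diamondE c 0 3 [0,2,3] := by
    rintro ⟨_, hmax⟩
    have := hmax _ hcrit013.1
    simp [pathWeight] at this
    linarith
  constructor
  · rintro ⟨⟨p, hp⟩, hc⟩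
    rw [isPath_iff] at hp
    rcases hp with ⟨rfl, _⟩ | ⟨rfl, rfl, _⟩ | ⟨rfl, rfl, _⟩ | ⟨rfl, rfl, _⟩ |
      ⟨rfl, rfl, _⟩ | ⟨rfl, rfl, _⟩
    · tauto
    · tauto
    · tauto
    · tauto
    · tauto
    · refine Or.inr (Or.inr (Or.inr (Or.inr (Or.inr ⟨rfl, rfl, ?_⟩))))
      exact hc _ hcrit013 1 (by simp [internalVerts])
  · intro hcase
    have single : ∀ (q : List (Fin 4)), (∃ p, IsPath diamondE i j p ∧ p = q ∧
        internalVerts q = []) →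
        (∀ p, IsCritical diamondE c i j p → p = q) → critEdge diamondE c L i j := by
      rintro q ⟨p0, hp0, rfl, hint⟩ huniq
      refine ⟨⟨p0, hp0⟩, ?_⟩
      intro p hp v hv
      rw [huniq p hp, hint] at hv
      simp at hv
    rcases hcase with rfl | ⟨rfl, rfl⟩ | ⟨rfl, rfl⟩ | ⟨rfl, rfl⟩ | ⟨rfl, rfl⟩ | ⟨rfl, rfl, h1L⟩
    · refine single [i] ⟨[i], (isPath_iff _ _ _).2 (by tauto), rfl, by simp [internalVerts]⟩ ?_
      intro p hp
      have := (isPath_iff _ _ _).1 hp.1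
      rcases this with ⟨_, rfl⟩ | ⟨rfl, h1, _⟩ | ⟨rfl, h1, _⟩ | ⟨rfl, h1, _⟩ |
        ⟨rfl, h1, _⟩ | ⟨rfl, h1, _⟩ <;> first | rfl | exact absurd h1 (by decide)
    · refine single [0,1] ⟨[0,1], (isPath_iff _ _ _).2 (by tauto), rfl,
        by simp [internalVerts]⟩ ?_
      intro p hp
      have := (isPath_iff _ _ _).1 hp.1
      rcases this with ⟨h1, _⟩ | ⟨_, _, rfl⟩ | ⟨_, h1, _⟩ | ⟨h1, _, _⟩ |
        ⟨h1, _, _⟩ | ⟨_, h1, _⟩ <;> first | rfl | exact absurd h1 (by decide)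
    · refine single [0,2] ⟨[0,2], (isPath_iff _ _ _).2 (by tauto), rfl,
        by simp [internalVerts]⟩ ?_
      intro p hp
      have := (isPath_iff _ _ _).1 hp.1
      rcases this with ⟨h1, _⟩ | ⟨_, h1, _⟩ | ⟨_, _, rfl⟩ | ⟨h1, _, _⟩ |
        ⟨h1, _, _⟩ | ⟨_, h1, _⟩ <;> first | rfl | exact absurd h1 (by decide)
    · refine single [1,3] ⟨[1,3], (isPath_iff _ _ _).2 (by tauto), rfl,
        by simp [internalVerts]⟩ ?_
      intro p hp
      have := (isPath_iff _ _ _).1 hp.1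
      rcases this with ⟨h1, _⟩ | ⟨h1, _, _⟩ | ⟨h1, _, _⟩ | ⟨_, _, rfl⟩ |
        ⟨h1, _, _⟩ | ⟨h1, _, _⟩ <;> first | rfl | exact absurd h1 (by decide)
    · refine single [2,3] ⟨[2,3], (isPath_iff _ _ _).2 (by tauto), rfl,
        by simp [internalVerts]⟩ ?_
      intro p hp
      have := (isPath_iff _ _ _).1 hp.1
      rcases this with ⟨h1, _⟩ | ⟨h1, _, _⟩ | ⟨h1, _, _⟩ | ⟨h1, _, _⟩ |
        ⟨_, _, rfl⟩ | ⟨h1, _, _⟩ <;> first | rfl | exact absurd h1 (by decide)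
    · refine ⟨⟨[0,1,3], hcrit013.1⟩, ?_⟩
      intro p hp v hv
      have hpeq : p = [0,1,3] := by
        have := (isPath_iff _ _ _).1 hp.1
        rcases this with ⟨ha, _⟩ | ⟨ha, hb, _⟩ | ⟨ha, hb, _⟩ | ⟨ha, hb, _⟩ |
          ⟨ha, hb, _⟩ | ⟨_, _, rfl | rfl⟩ <;>
          first
            | rfl
            | exact absurd ha (by decide)
            | exact absurd hb (by decide)
            | exact absurd hp hnotcrit023
      subst hpeq
      simp [internalVerts] at hv
      subst hv
      exact h1L

set_option synthInstance.maxSize 10000 in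
set_option maxHeartbeats 40000000 in
/-- in the diamond DAG with `c₁₂ + c₂₄ > c₁₃ + c₃₄`, the
C*-separations among singletons are exactly `2 ⊥ 3 | 1`, `1 ⊥ 4 | {2,3}` and
`1 ⊥ 4 | 2`; in particular `1` is not C*-separated from `4` given `{3}`
(vertices 1,2,3,4 are `0,1,2,3 : Fin 4`). -/
theorem stmt14 (c : Fin 4 → Fin 4 → ℝ)
    (h : c 0 2 + c 2 3 < c 0 1 + c 1 3) :
    (∀ (i j : Fin 4) (L : Set (Fin 4)), i ≠ j → i ∉ L → j ∉ L →
      (CSep diamondE c L i j ↔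
        ((({i, j} : Set (Fin 4)) = {1, 2} ∧ L = {0}) ∨
         (({i, j} : Set (Fin 4)) = {0, 3} ∧ L = {1, 2}) ∨
         (({i, j} : Set (Fin 4)) = {0, 3} ∧ L = {1})))) ∧
    ¬ CSep diamondE c ({2} : Set (Fin 4)) 0 3 := by
  have hd := critEdge_iff c h
  constructor
  · intro i j L hij hiL hjL
    by_cases h0 : (0 : Fin 4) ∈ L <;> by_cases h1 : (1 : Fin 4) ∈ L <;>
      by_cases h2 : (2 : Fin 4) ∈ L <;> by_cases h3 : (3 : Fin 4) ∈ L <;>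
    [ (have hL : L = ({0, 1, 2, 3} : Set (Fin 4)) := eqSet L _ (by simp [h0]) (by simp [h1]) (by simp [h2]) (by simp [h3]));
      (have hL : L = ({0, 1, 2} : Set (Fin 4)) := eqSet L _ (by simp [h0]) (by simp [h1]) (by simp [h2]) (by simp [h3]));
      (have hL : L = ({0, 1, 3} : Set (Fin 4)) := eqSet L _ (by simp [h0]) (by simp [h1]) (by simp [h2]) (by simp [h3]));
      (have hL : L = ({0, 1} : Set (Fin 4)) := eqSet L _ (by simp [h0]) (by simp [h1]) (by simp [h2]) (by simp [h3]));
      (have hL : L = ({0, 2, 3} : Set (Fin 4)) := eqSet L _ (by simp [h0]) (by simp [h1]) (by simp [h2]) (by simp [h3]));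
      (have hL : L = ({0, 2} : Set (Fin 4)) := eqSet L _ (by simp [h0]) (by simp [h1]) (by simp [h2]) (by simp [h3]));
      (have hL : L = ({0, 3} : Set (Fin 4)) := eqSet L _ (by simp [h0]) (by simp [h1]) (by simp [h2]) (by simp [h3]));
      (have hL : L = ({0} : Set (Fin 4)) := eqSet L _ (by simp [h0]) (by simp [h1]) (by simp [h2]) (by simp [h3]));
      (have hL : L = ({1, 2, 3} : Set (Fin 4)) := eqSet L _ (by simp [h0]) (by simp [h1]) (by simp [h2]) (by simp [h3]));
      (have hL : L = ({1, 2} : Set (Fin 4)) := eqSet L _ (by simp [h0]) (by simp [h1]) (by simp [h2]) (by simp [h3]));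
      (have hL : L = ({1, 3} : Set (Fin 4)) := eqSet L _ (by simp [h0]) (by simp [h1]) (by simp [h2]) (by simp [h3]));
      (have hL : L = ({1} : Set (Fin 4)) := eqSet L _ (by simp [h0]) (by simp [h1]) (by simp [h2]) (by simp [h3]));
      (have hL : L = ({2, 3} : Set (Fin 4)) := eqSet L _ (by simp [h0]) (by simp [h1]) (by simp [h2]) (by simp [h3]));
      (have hL : L = ({2} : Set (Fin 4)) := eqSet L _ (by simp [h0]) (by simp [h1]) (by simp [h2]) (by simp [h3]));
      (have hL : L = ({3} : Set (Fin 4)) := eqSet L _ (by simp [h0]) (by simp [h1]) (by simp [h2]) (by simp [h3]));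
      (have hL : L = (∅ : Set (Fin 4)) := eqSet L _ (by simp [h0]) (by simp [h1]) (by simp [h2]) (by simp [h3])) ] <;>
    subst hL <;> clear h0 h1 h2 h3 <;>
    fin_cases i <;> fin_cases j <;>
    first
      | exact absurd rfl hij
      | (simp only [CSep, starConn, hd, Set.ext_iff, Set.mem_insert_iff,
          Set.mem_singleton_iff, Set.mem_empty_iff_false]
         decide)
      | simp at hiL hjL
  · simp only [CSep, starConn, hd, Set.mem_singleton_iff, not_not]
    decide
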